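/- Let Γ be a finite connected cubic girth-regular graph of finite girth g with n vertices and signature (1, 1, 2). Then: (i) g is even; (ii) the set of edges lying on exactly two girth cycles forms a perfect matching of Γ; (iii) the set of edges lying on exactly one girth cycle spans a 2-regular spanning subgraph of Γ (a disjoint union of cycles covering all vertices); and (iv) g/2 divides n. -/

import Mathlib

open SimpleGraph

/-- `s` is the edge set of some cycle of length `g` in `G`. -/
def IsGirthCycleEdgeSet {V : Type*} (G : SimpleGraph V) (g : ℕ) (s : Set (Sym2 V)) : Prop :=
  ∃ (u : V) (w : G.Walk u u), w.IsCycle ∧ w.length = g ∧ s = {e | e ∈ w.edges}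

/-- The number of cycles of length `g` in `G` that contain the edge `e`. -/
noncomputable def girthCycleCount {V : Type*} (G : SimpleGraph V) (g : ℕ) (e : Sym2 V) : ℕ :=
  Set.ncard {s : Set (Sym2 V) | IsGirthCycleEdgeSet G g s ∧ e ∈ s}

/-- The multiset of the numbers of `g`-cycles through the edges incident to `v`. -/
noncomputable def vertexSignature {V : Type*} [Fintype V] (G : SimpleGraph V) (g : ℕ)
    (v : V) : Multiset ℕ :=
  ((G.neighborSet v).toFinite.toFinset.val).map fun u => girthCycleCount G g s(v, u)

lemma sig_lemmas {V : Type*} [Fintype V] (G : SimpleGraph V) (g : ℕ)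
    (hsig : ∀ v : V, vertexSignature G g v = {1, 1, 2}) (v : V) :
    (∀ u, G.Adj v u → girthCycleCount G g s(v,u) = 1 ∨ girthCycleCount G g s(v,u) = 2) ∧
    (∃! u : V, G.Adj v u ∧ girthCycleCount G g s(v,u) = 2) ∧
    {u : V | G.Adj v u ∧ girthCycleCount G g s(v,u) = 1}.ncard = 2 ∧
    (G.neighborSet v).ncard = 3 := by
  classical
  set f : V → ℕ := fun u => girthCycleCount G g s(v, u) with hf
  set m : Multiset V := (G.neighborSet v).toFinite.toFinset.val with hm
  have hmap : m.map f = {1, 1, 2} := hsig v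
  have hnodup : m.Nodup := (G.neighborSet v).toFinite.toFinset.nodup
  have hmem : ∀ u, u ∈ m ↔ G.Adj v u := by
    intro u
    rw [hm, ← Finset.mem_def, Set.Finite.mem_toFinset, mem_neighborSet]
  have hval : ∀ u, G.Adj v u → f u = 1 ∨ f u = 2 := by
    intro u hu
    have : f u ∈ m.map f := Multiset.mem_map_of_mem f ((hmem u).2 hu)
    rw [hmap] at this
    simp only [Multiset.insert_eq_cons, Multiset.mem_cons, Multiset.mem_singleton] at this
    tauto
  have hcount2 : (m.filter fun u => 2 = f u).card = 1 := by
    rw [← Multiset.count_map, hmap]; decide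
  have hcount1 : (m.filter fun u => 1 = f u).card = 2 := by
    rw [← Multiset.count_map, hmap]; decide
  obtain ⟨a, ha⟩ := Multiset.card_eq_one.1 hcount2
  have hamem : a ∈ m ∧ 2 = f a := by
    have : a ∈ m.filter fun u => 2 = f u := ha ▸ Multiset.mem_singleton_self a
    simpa using Multiset.mem_filter.1 this
  refine ⟨hval, ⟨a, ⟨(hmem a).1 hamem.1, hamem.2.symm⟩, ?_⟩, ?_, ?_⟩
  · rintro u ⟨hu, hfu⟩
    have : u ∈ m.filter fun u => 2 = f u :=
      Multiset.mem_filter.2 ⟨(hmem u).2 hu, hfu.symm⟩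
    rw [ha, Multiset.mem_singleton] at this
    exact this
  · have hset : {u : V | G.Adj v u ∧ f u = 1} =
        ↑(((G.neighborSet v).toFinite.toFinset).filter fun u => 1 = f u) := by
      ext u
      simp only [Set.mem_setOf_eq, Finset.coe_filter, Set.Finite.mem_toFinset, mem_neighborSet,
        eq_comm]
    rw [hset, Set.ncard_coe_finset]
    exact hcount1
  · have h3 : Multiset.card m = 3 := by
      have := congrArg Multiset.card hmap
      rw [Multiset.card_map] at this
      simpa using this
    rw [Set.ncard_eq_toFinset_card _ (G.neighborSet v).toFinite]
    exact h3

lemma aux_start_unique {V : Type*} {G : SimpleGraph V} {b a x y : V} (q : G.Walk b a)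
    (hq : q.IsPath) (hx : s(b,x) ∈ q.edges) (hy : s(b,y) ∈ q.edges) : x = y := by
  cases q with
  | nil => simp at hx
  | cons h q' =>
    rename_i c
    rw [Walk.cons_isPath_iff] at hq
    have key : ∀ z, s(b,z) ∈ (Walk.cons h q').edges → z = c := by
      intro z hz
      rw [Walk.edges_cons, List.mem_cons] at hz
      rcases hz with hz | hz
      · rw [Sym2.eq_iff] at hz
        rcases hz with ⟨-, rfl⟩ | ⟨hbc, rfl⟩
        · rfl
        · exact absurd hbc h.ne
      · exact absurd (Walk.fst_mem_support_of_mem_edges q' hz) hq.2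
    rw [key x hx, key y hy]

lemma aux_exists_start {V : Type*} {G : SimpleGraph V} {b a : V} (q : G.Walk b a)
    (hb : b ≠ a) : ∃ x, s(b,x) ∈ q.edges := by
  cases q with
  | nil => exact absurd rfl hb
  | cons h q' => rename_i c; exact ⟨c, by simp⟩

lemma aux_cycle_base {V : Type*} {G : SimpleGraph V} {v : V} (c : G.Walk v v)
    (hc : c.IsCycle) :
    ∃ x y, x ≠ y ∧ ∀ z, (s(v,z) ∈ c.edges ↔ z = x ∨ z = y) := by
  cases c with
  | nil => exact absurd hc (Walk.IsCycle.not_of_nil)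
  | cons h p =>
    rename_i u
    rw [Walk.cons_isCycle_iff] at hc
    obtain ⟨hp, hne⟩ := hc
    have hrev : p.reverse.IsPath := hp.reverse
    have hmem : ∀ z, s(v,z) ∈ p.edges ↔ s(v,z) ∈ p.reverse.edges := by
      intro z; rw [Walk.edges_reverse, List.mem_reverse]
    obtain ⟨x, hx⟩ := aux_exists_start p.reverse h.ne
    have hxp : s(v,x) ∈ p.edges := (hmem x).2 hx
    refine ⟨u, x, ?_, ?_⟩
    · rintro rfl
      exact hne hxp
    · intro z
      rw [Walk.edges_cons, List.mem_cons, Sym2.congr_right]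
      constructor
      · rintro (hz | hz)
        · exact Or.inl hz
        · exact Or.inr (aux_start_unique p.reverse hrev ((hmem z).1 hz) hx)
      · rintro (rfl | rfl)
        · exact Or.inl rfl
        · exact Or.inr hxp

lemma aux_cycle_nbrs {V : Type*} {G : SimpleGraph V} {u v : V} (c : G.Walk u u)
    (hc : c.IsCycle) (hv : v ∈ c.support) :
    ∃ x y, x ≠ y ∧ G.Adj v x ∧ G.Adj v y ∧ ∀ z, (s(v,z) ∈ c.edges ↔ z = x ∨ z = y) := by
  classical
  obtain ⟨x, y, hxy, hchar⟩ := aux_cycle_base (c.rotate v hv) (hc.rotate hv)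
  have hedges : ∀ e, e ∈ (c.rotate v hv).edges ↔ e ∈ c.edges :=
    fun e => (c.rotate_edges v hv).mem_iff
  have hx : G.Adj v x := c.adj_of_mem_edges ((hedges _).1 ((hchar x).2 (Or.inl rfl)))
  have hy : G.Adj v y := c.adj_of_mem_edges ((hedges _).1 ((hchar y).2 (Or.inr rfl)))
  exact ⟨x, y, hxy, hx, hy, fun z => (hedges _).symm.trans (hchar z)⟩

lemma key_one_two {V : Type*} [Fintype V] (G : SimpleGraph V) (g : ℕ)
    (hsig : ∀ v : V, vertexSignature G g v = {1, 1, 2}) {u0 v : V}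
    (w : G.Walk u0 u0) (hcyc : w.IsCycle) (hlen : w.length = g)
    {x y : V} (hxy : x ≠ y) (hax : G.Adj v x) (hay : G.Adj v y)
    (hchar : ∀ z, s(v,z) ∈ w.edges ↔ z = x ∨ z = y) :
    (girthCycleCount G g s(v,x) = 2 ∧ girthCycleCount G g s(v,y) = 1) ∨
    (girthCycleCount G g s(v,x) = 1 ∧ girthCycleCount G g s(v,y) = 2) := by
  classical
  obtain ⟨hval, ⟨u2, ⟨hu2adj, hu2⟩, huniq⟩, -, hn3⟩ := sig_lemmas G g hsig v
  have hC : IsGirthCycleEdgeSet G g {e | e ∈ w.edges} := ⟨u0, w, hcyc, hlen, rfl⟩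
  have hboth : ¬ (girthCycleCount G g s(v,x) = 1 ∧ girthCycleCount G g s(v,y) = 1) := by
    rintro ⟨hfx, hfy⟩
    have hu2x : u2 ≠ x := fun h => by rw [h, hfx] at hu2; exact absurd hu2 (by norm_num)
    have hu2y : u2 ≠ y := fun h => by rw [h, hfy] at hu2; exact absurd hu2 (by norm_num)
    have hNset : {x, y, u2} = G.neighborSet v := by
      apply Set.eq_of_subset_of_ncard_le
      · rintro z (rfl | rfl | rfl)
        · exact hax
        · exact hay
        · exact hu2adj
      · rw [hn3]
        have : ({x, y, u2} : Set V).ncard = 3 :=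
          Set.ncard_eq_three.2 ⟨x, y, u2, hxy, (Ne.symm hu2x), (Ne.symm hu2y), rfl⟩
        rw [this]
      · exact Set.toFinite _
    have claim : ∀ t, (IsGirthCycleEdgeSet G g t ∧ s(v,u2) ∈ t) → t = {e | e ∈ w.edges} := by
      rintro t ⟨⟨a, wt, hwc, hwl, rfl⟩, hmemt⟩
      simp only [Set.mem_setOf_eq] at hmemt
      have hv : v ∈ wt.support := Walk.fst_mem_support_of_mem_edges wt hmemt
      obtain ⟨p, q, hpq, hp, hq, hcharU⟩ := aux_cycle_nbrs wt hwc hv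
      obtain ⟨z, hzadj, hzne, hzmem⟩ :
          ∃ z, G.Adj v z ∧ z ≠ u2 ∧ s(v,z) ∈ wt.edges := by
        rcases (hcharU u2).1 hmemt with rfl | rfl
        · exact ⟨q, hq, Ne.symm hpq, (hcharU q).2 (Or.inr rfl)⟩
        · exact ⟨p, hp, hpq, (hcharU p).2 (Or.inl rfl)⟩
      have hzxy : z = x ∨ z = y := by
        have : z ∈ ({x, y, u2} : Set V) := hNset ▸ hzadj
        rcases this with h | h | h
        · exact Or.inl h
        · exact Or.inr h
        · exact absurd h hzne
      have hfz : girthCycleCount G g s(v,z) = 1 := by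
        rcases hzxy with rfl | rfl
        · exact hfx
        · exact hfy
      have hzC : s(v,z) ∈ ({e | e ∈ w.edges} : Set (Sym2 V)) := by
        simp only [Set.mem_setOf_eq]
        exact (hchar z).2 hzxy
      obtain ⟨t0, ht0⟩ := Set.ncard_eq_one.1 hfz
      have h1 : ({e | e ∈ wt.edges} : Set (Sym2 V)) ∈
          {s : Set (Sym2 V) | IsGirthCycleEdgeSet G g s ∧ s(v,z) ∈ s} :=
        ⟨⟨a, wt, hwc, hwl, rfl⟩, hzmem⟩
      have h2 : ({e | e ∈ w.edges} : Set (Sym2 V)) ∈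
          {s : Set (Sym2 V) | IsGirthCycleEdgeSet G g s ∧ s(v,z) ∈ s} := ⟨hC, hzC⟩
      rw [ht0, Set.mem_singleton_iff] at h1 h2
      rw [h1, h2]
    obtain ⟨s1, s2, hs12, hset⟩ := Set.ncard_eq_two.1 hu2
    have hs1 : s1 ∈ {s : Set (Sym2 V) | IsGirthCycleEdgeSet G g s ∧ s(v,u2) ∈ s} := by
      rw [hset]; exact Set.mem_insert _ _
    have hs2 : s2 ∈ {s : Set (Sym2 V) | IsGirthCycleEdgeSet G g s ∧ s(v,u2) ∈ s} := by
      rw [hset]; exact Set.mem_insert_iff.2 (Or.inr rfl)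
    exact hs12 ((claim s1 hs1).trans (claim s2 hs2).symm)
  have hnotboth2 : ¬ (girthCycleCount G g s(v,x) = 2 ∧ girthCycleCount G g s(v,y) = 2) := by
    rintro ⟨hfx, hfy⟩
    exact hxy ((huniq x ⟨hax, hfx⟩).trans (huniq y ⟨hay, hfy⟩).symm)
  rcases hval x hax with h1 | h2 <;> rcases hval y hay with h1' | h2'
  · exact absurd ⟨h1, h1'⟩ hboth
  · exact Or.inr ⟨h1, h2'⟩
  · exact Or.inl ⟨h2, h1'⟩
  · exact absurd ⟨h2, h2'⟩ hnotboth2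

lemma even_girth_of_cycle {V : Type*} [Fintype V] (G : SimpleGraph V) (g : ℕ)
    (hsig : ∀ v : V, vertexSignature G g v = {1, 1, 2}) {u0 : V}
    (w : G.Walk u0 u0) (hcyc : w.IsCycle) (hlen : w.length = g) : Even g := by
  classical
  set P : Finset (V × V) := Finset.univ.filter
    (fun p => s(p.1, p.2) ∈ w.edges ∧ girthCycleCount G g s(p.1, p.2) = 2) with hP
  set T : Finset (Sym2 V) := Finset.univ.filter
    (fun e => e ∈ w.edges ∧ girthCycleCount G g e = 2) with hT
  have hmapsT : ∀ p ∈ P, s(p.1, p.2) ∈ T := by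
    rintro ⟨c, d⟩ hp
    rw [hP, Finset.mem_filter] at hp
    rw [hT, Finset.mem_filter]
    exact ⟨Finset.mem_univ _, hp.2⟩
  have hA : P.card = 2 * T.card := by
    rw [Finset.card_eq_sum_card_fiberwise hmapsT]
    rw [Finset.sum_congr rfl (fun e he => ?_), Finset.sum_const, smul_eq_mul, mul_comm]
    show (P.filter fun p => s(p.1, p.2) = e).card = 2
    rw [hT, Finset.mem_filter] at he
    obtain ⟨-, hew, hec⟩ := he
    induction e using Sym2.ind with
    | _ a b =>
      have hadj : G.Adj a b := Walk.adj_of_mem_edges w hew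
      have hfib : (P.filter fun p => s(p.1, p.2) = s(a, b)) = {(a, b), (b, a)} := by
        ext ⟨c, d⟩
        simp only [Finset.mem_filter, hP, Finset.mem_univ, true_and, Finset.mem_insert,
          Finset.mem_singleton, Prod.mk.injEq]
        constructor
        · rintro ⟨-, heq⟩
          rw [Sym2.eq_iff] at heq
          tauto
        · rintro (⟨rfl, rfl⟩ | ⟨rfl, rfl⟩)
          · exact ⟨⟨hew, hec⟩, rfl⟩
          · refine ⟨⟨?_, ?_⟩, Sym2.eq_swap⟩
            · rwa [Sym2.eq_swap]
            · rwa [Sym2.eq_swap]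
      rw [hfib]
      rw [Finset.card_insert_of_notMem, Finset.card_singleton]
      simp only [Finset.mem_singleton, Prod.mk.injEq]
      rintro ⟨rfl, -⟩
      exact hadj.ne rfl
  have hmapsS : ∀ p ∈ P, p.1 ∈ w.support.toFinset := by
    rintro ⟨c, d⟩ hp
    rw [hP, Finset.mem_filter] at hp
    exact List.mem_toFinset.2 (Walk.fst_mem_support_of_mem_edges w hp.2.1)
  have hB : P.card = w.support.toFinset.card := by
    rw [Finset.card_eq_sum_card_fiberwise hmapsS]
    rw [Finset.sum_congr rfl (fun v hv => ?_), Finset.sum_const, smul_eq_mul, mul_one]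
    show (P.filter fun p => p.1 = v).card = 1
    have hv' : v ∈ w.support := List.mem_toFinset.1 hv
    obtain ⟨x, y, hxy, hax, hay, hchar⟩ := aux_cycle_nbrs w hcyc hv'
    have hone : ∃ z, (s(v, z) ∈ w.edges ∧ girthCycleCount G g s(v, z) = 2) ∧
        ∀ z', s(v, z') ∈ w.edges → girthCycleCount G g s(v, z') = 2 → z' = z := by
      rcases key_one_two G g hsig w hcyc hlen hxy hax hay hchar with ⟨h2, h1⟩ | ⟨h1, h2⟩
      · refine ⟨x, ⟨(hchar x).2 (Or.inl rfl), h2⟩, fun z' hz' hc2 => ?_⟩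
        rcases (hchar z').1 hz' with rfl | rfl
        · rfl
        · rw [h1] at hc2; norm_num at hc2
      · refine ⟨y, ⟨(hchar y).2 (Or.inr rfl), h2⟩, fun z' hz' hc2 => ?_⟩
        rcases (hchar z').1 hz' with rfl | rfl
        · rw [h1] at hc2; norm_num at hc2
        · rfl
    obtain ⟨z, ⟨hzmem, hzc⟩, hzuniq⟩ := hone
    have hfib : (P.filter fun p => p.1 = v) = {(v, z)} := by
      ext ⟨c, d⟩
      simp only [Finset.mem_filter, hP, Finset.mem_univ, true_and, Finset.mem_singleton,
        Prod.mk.injEq]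
      constructor
      · rintro ⟨⟨hm, hc2⟩, rfl⟩
        exact ⟨rfl, hzuniq d hm hc2⟩
      · rintro ⟨rfl, rfl⟩
        exact ⟨⟨hzmem, hzc⟩, rfl⟩
    rw [hfib, Finset.card_singleton]
  have hScard : w.support.toFinset.card = g := by
    have hnd : w.support.tail.Nodup := hcyc.support_nodup
    have htails : w.support.toFinset = w.support.tail.toFinset := by
      cases w with
      | nil => exact absurd hcyc (Walk.IsCycle.not_of_nil)
      | cons h p =>
        simp only [Walk.support_cons, List.toFinset_cons, List.tail_cons]
        exact Finset.insert_eq_self.2 (List.mem_toFinset.2 p.end_mem_support)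
    rw [htails, List.toFinset_card_of_nodup hnd, List.length_tail, Walk.length_support,
      Nat.add_sub_cancel, hlen]
  refine ⟨T.card, ?_⟩
  omega

lemma total_count {V : Type*} [Fintype V] (G : SimpleGraph V) (g : ℕ)
    (hsig : ∀ v : V, vertexSignature G g v = {1, 1, 2}) :
    ∃ c : ℕ, 4 * Fintype.card V = 2 * (c * g) := by
  classical
  have hFin : {s : Set (Sym2 V) | IsGirthCycleEdgeSet G g s}.Finite := Set.toFinite _
  set F : Finset (Set (Sym2 V)) := hFin.toFinset with hF
  refine ⟨F.card, ?_⟩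
  have h1 : ∀ e : Sym2 V, girthCycleCount G g e = (F.filter (fun s => e ∈ s)).card := by
    intro e
    rw [girthCycleCount, ← Set.ncard_coe_finset]
    congr 1
    ext s
    simp only [Set.mem_setOf_eq, Finset.coe_filter, hF, Set.Finite.mem_toFinset]
  have h2 : ∀ s ∈ F, (Finset.univ.filter (fun e : Sym2 V => e ∈ s)).card = g := by
    intro s hs
    rw [hF, Set.Finite.mem_toFinset] at hs
    obtain ⟨u, w, hcyc, hlen, rfl⟩ := hs
    have heq : (Finset.univ.filter (fun e : Sym2 V => e ∈ {e | e ∈ w.edges})) = w.edges.toFinset := by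
      ext e
      simp
    have hcard : (Finset.filter (fun e : Sym2 V => e ∈ {e | e ∈ w.edges}) Finset.univ).card
        = w.edges.toFinset.card := by
      convert congrArg Finset.card heq using 2
    rw [List.toFinset_card_of_nodup hcyc.isCircuit.isTrail.edges_nodup, Walk.length_edges,
      hlen] at hcard
    convert hcard using 3
  have hsum1 : ∑ e : Sym2 V, girthCycleCount G g e = F.card * g := by
    calc ∑ e : Sym2 V, girthCycleCount G g e
        = ∑ e : Sym2 V, ∑ s ∈ F, (if e ∈ s then 1 else 0) := by
          refine Finset.sum_congr rfl fun e _ => ?_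
          rw [h1 e, Finset.card_filter]
      _ = ∑ s ∈ F, ∑ e : Sym2 V, (if e ∈ s then 1 else 0) := Finset.sum_comm
      _ = ∑ s ∈ F, g := by
          refine Finset.sum_congr rfl fun s hs => ?_
          rw [← Finset.card_filter, h2 s hs]
      _ = F.card * g := by rw [Finset.sum_const, smul_eq_mul]
  have hsum2 : ∑ p : V × V, (if G.Adj p.1 p.2 then girthCycleCount G g s(p.1, p.2) else 0)
      = 4 * Fintype.card V := by
    rw [Fintype.sum_prod_type]
    have : ∀ v : V, ∑ u : V, (if G.Adj v u then girthCycleCount G g s(v, u) else 0) = 4 := by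
      intro v
      rw [← Finset.sum_filter]
      have hfs : Finset.univ.filter (fun u => G.Adj v u) = (G.neighborSet v).toFinite.toFinset := by
        ext u
        simp [Set.Finite.mem_toFinset]
      rw [hfs, Finset.sum_eq_multiset_sum]
      have : ((G.neighborSet v).toFinite.toFinset.val.map
          fun u => girthCycleCount G g s(v, u)).sum = ({1, 1, 2} : Multiset ℕ).sum := by
        rw [← vertexSignature, hsig v]
      rw [this]
      decide
    rw [Finset.sum_congr rfl fun v _ => this v, Finset.sum_const, smul_eq_mul, mul_comm,
      Finset.card_univ]
  have hsum3 : ∑ p : V × V, (if G.Adj p.1 p.2 then girthCycleCount G g s(p.1, p.2) else 0)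
      = 2 * ∑ e : Sym2 V, girthCycleCount G g e := by
    rw [← Finset.sum_fiberwise_of_maps_to (t := (Finset.univ : Finset (Sym2 V)))
      (g := fun p : V × V => s(p.1, p.2))
      (fun p _ => Finset.mem_univ _)
      (fun p => if G.Adj p.1 p.2 then girthCycleCount G g s(p.1, p.2) else 0),
      Finset.mul_sum]
    refine Finset.sum_congr rfl fun e _ => ?_
    induction e using Sym2.ind with
    | _ a b =>
      by_cases hadj : G.Adj a b
      · have hfib : Finset.univ.filter (fun p : V × V => s(p.1, p.2) = s(a, b))
            = {(a, b), (b, a)} := by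
          ext ⟨c, d⟩
          simp only [Finset.mem_filter, Finset.mem_univ, true_and, Finset.mem_insert,
            Finset.mem_singleton, Prod.mk.injEq, Sym2.eq_iff]
        rw [hfib, Finset.sum_insert (by
          simp only [Finset.mem_singleton, Prod.mk.injEq]
          rintro ⟨rfl, -⟩
          exact hadj.ne rfl), Finset.sum_singleton]
        simp only [hadj, if_true, hadj.symm, Sym2.eq_swap]
        ring
      · have hempty : {s : Set (Sym2 V) | IsGirthCycleEdgeSet G g s ∧ s(a, b) ∈ s} = ∅ := by
          rw [Set.eq_empty_iff_forall_notMem]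
          rintro s ⟨⟨u, w, hcyc, hlen, rfl⟩, hmem⟩
          exact hadj (Walk.adj_of_mem_edges w hmem)
        have hz : girthCycleCount G g s(a, b) = 0 := by
          rw [girthCycleCount, hempty, Set.ncard_empty]
        rw [hz, mul_zero]
        refine Finset.sum_eq_zero fun p hp => ?_
        rw [Finset.mem_filter] at hp
        rw [if_neg]
        intro hadj'
        exact hadj (G.mem_edgeSet.1 (hp.2 ▸ G.mem_edgeSet.2 hadj'))
  rw [← hsum2, hsum3, hsum1]

/-- If a finite connected cubic girth-regular graph of finite girth `g`
with `n` vertices has signature `(1, 1, 2)`, then: (i) `g` is even; (ii) the edges lying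
on exactly two girth cycles form a perfect matching (every vertex has a unique neighbour
along such an edge); (iii) the edges lying on exactly one girth cycle span a `2`-regular
spanning subgraph (every vertex has exactly two neighbours along such edges); and
(iv) `g/2` divides `n`. -/
theorem stmt15 {V : Type*} [Fintype V] (G : SimpleGraph V) [DecidableRel G.Adj]
    (g : ℕ) (hconn : G.Connected)
    (hreg : G.IsRegularOfDegree 3) (hg : G.egirth = (g : ℕ∞))
    (hsig : ∀ v : V, vertexSignature G g v = {1, 1, 2}) :
    Even g ∧
      (∀ v : V, ∃! u : V, G.Adj v u ∧ girthCycleCount G g s(v, u) = 2) ∧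
      (∀ v : V, Set.ncard {u : V | G.Adj v u ∧ girthCycleCount G g s(v, u) = 1} = 2) ∧
      g / 2 ∣ Fintype.card V := by
  classical
  have hnotacyclic : ¬ G.IsAcyclic := by
    intro h
    rw [h.egirth_eq_top] at hg
    exact (ENat.coe_ne_top g) hg.symm
  obtain ⟨a, w, hcyc, hlenE⟩ := exists_egirth_eq_length.2 hnotacyclic
  have hlen : w.length = g := by
    rw [hg] at hlenE
    exact_mod_cast hlenE.symm
  have heven : Even g := even_girth_of_cycle G g hsig w hcyc hlen
  obtain ⟨k, hk⟩ := heven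
  obtain ⟨c, hc⟩ := total_count G g hsig
  have hn : Fintype.card V = c * k := by
    have h4 : 4 * Fintype.card V = 4 * (c * k) := by rw [hc, hk]; ring
    exact Nat.eq_of_mul_eq_mul_left (by norm_num) h4
  refine ⟨⟨k, hk⟩, fun v => (sig_lemmas G g hsig v).2.1,
    fun v => (sig_lemmas G g hsig v).2.2.1, ?_⟩
  have hg2 : g / 2 = k := by omega
  rw [hg2, hn]
  exact dvd_mul_left k c
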